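/- arXiv:2403.10116 — 3 statements merged into one kernel-verified Lean document; each statement's English description precedes it below -/
import Mathlib

section
/- Undershoot bound for threshold selection: let D be a finite multiset of integers in {0,...,U} (U a power of 2) with dyadic sub-domain sums S_j = Sum(D ∩ [2^{j-1}+1, 2^j]). Suppose noisy estimates satisfy |S̃_j − S_j| ≤ c·2^j for all j, for some c ≥ 0, and let t be the largest index j with S̃_j > c·2^j (with t = −∞, i.e., τ = 0, if no such j exists). Then for every j > t, the number of elements of D in [2^{j-1}+1, 2^j] is at most 4c (since each such element is at least 2^{j-1} ≥ 2^j/2 and S_j ≤ 2c·2^j), and consequently Σ_{j > t} S_j ≤ 4c · Max(D) · (number of nonempty sub-domains above t) — more precisely, Σ_{j > t} S_j ≤ 2c · Σ_{j > t, j ≤ ⌈log₂ Max(D)⌉} 2^j ≤ 8c · Max(D). -/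
lemma fold_max_cast (D : Multiset ℕ) :
    (D.map (Nat.cast : ℕ → ℝ)).fold max 0 = ((D.fold max 0 : ℕ) : ℝ) := by
  induction D using Multiset.induction with
  | empty => simp
  | cons a s ih =>
    simp only [Multiset.map_cons, Multiset.fold_cons_left, ih, Nat.cast_max]

lemma le_fold_max' (D : Multiset ℕ) : ∀ x ∈ D, x ≤ D.fold max 0 := by
  induction D using Multiset.induction with
  | empty => simp
  | cons a s ih =>
    intro x hx
    rw [Multiset.fold_cons_left]
    rcases Multiset.mem_cons.mp hx with h | h
    · exact h ▸ le_max_left _ _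
    · exact le_trans (ih x h) (le_max_right _ _)

/-- Undershoot bound for threshold selection. Let `D` be a nonempty finite
multiset of integers in `{0,...,2^L}` with dyadic sub-domain sums
`S j = Sum(D ∩ [2^(j-1)+1, 2^j])` (in ℕ the interval is `{x | 2^j / 2 < x ∧ x ≤ 2^j}`).
Suppose noisy estimates `Sest j` satisfy `|Sest j − S j| ≤ c·2^j` for all `j ≤ L`, and `t`
is the largest index `j ≤ L` with `Sest j > c·2^j` (`t = -1` representing `−∞`/`τ = 0` if
no such index exists; formally we assume no `j > t` passes the test). Then for every
`j > t` the number of elements of `D` in the `j`-th interval is at most `4c`, and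
`Σ_{j > t} S j ≤ 8·c·Max(D)`. -/
theorem undershoot_bound (L : ℕ) (D : Multiset ℕ) (hne : D ≠ 0)
    (hD : ∀ x ∈ D, x ≤ 2 ^ L) (c : ℝ) (hc : 0 ≤ c)
    (Sest : ℕ → ℝ)
    (herr : ∀ j ≤ L,
      |Sest j - ((D.filter (fun x => 2 ^ j / 2 < x ∧ x ≤ 2 ^ j)).sum : ℝ)| ≤ c * 2 ^ j)
    (t : ℤ)
    (ht : ∀ j ≤ L, t < (j : ℤ) → ¬ (c * 2 ^ j < Sest j)) :
    (∀ j ≤ L, t < (j : ℤ) →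
        ((D.filter (fun x => 2 ^ j / 2 < x ∧ x ≤ 2 ^ j)).card : ℝ) ≤ 4 * c) ∧
      (∑ j ∈ (Finset.range (L + 1)).filter (fun (j : ℕ) => t < (j : ℤ)),
          ((D.filter (fun x => 2 ^ j / 2 < x ∧ x ≤ 2 ^ j)).sum : ℝ)) ≤
        8 * c * (D.fold max 0 : ℝ) := by
  have hco : ∀ (E : Multiset ℕ), (E : Multiset ℝ) = E.map Nat.cast := fun E =>
    Multiset.bind_singleton E _
  rw [show ((D : Multiset ℝ).fold max 0) = ((D.fold max 0 : ℕ) : ℝ) by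
    rw [hco]; exact fold_max_cast D]
  set M := D.fold max 0 with hM
  have hxM : ∀ x ∈ D, x ≤ M := le_fold_max' D
  -- S_j ≤ 2c·2^j for j > t
  have hSle : ∀ j, j ≤ L → t < (j : ℤ) →
      ((D.filter (fun x => 2 ^ j / 2 < x ∧ x ≤ 2 ^ j)).sum : ℝ) ≤ 2 * c * 2 ^ j := by
    intro j hj hjt
    have h1 := abs_le.mp (herr j hj)
    have h2 := ht j hj hjt
    push_neg at h2
    nlinarith [h1.1, h1.2]
  constructor
  · intro j hj hjt
    have hsum := hSle j hj hjt
    set F := D.filter (fun x => 2 ^ j / 2 < x ∧ x ≤ 2 ^ j) with hF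
    have hlow : F.card * (2 ^ j / 2 + 1) ≤ F.sum := by
      have := Multiset.card_nsmul_le_sum (s := F) (a := 2 ^ j / 2 + 1)
        (fun x hx => by
          have h := (Multiset.mem_filter.mp hx).2.1
          omega)
      simpa [smul_eq_mul, mul_comm] using this
    have hdiv : 2 ^ j ≤ 2 * (2 ^ j / 2 + 1) := by omega
    have hnat : F.card * 2 ^ j ≤ 2 * F.sum := by
      calc F.card * 2 ^ j ≤ F.card * (2 * (2 ^ j / 2 + 1)) := Nat.mul_le_mul_left _ hdiv
        _ = 2 * (F.card * (2 ^ j / 2 + 1)) := by ring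
        _ ≤ 2 * F.sum := Nat.mul_le_mul_left _ hlow
    have hnatR : (F.card : ℝ) * 2 ^ j ≤ 2 * (F.sum : ℝ) := by
      exact_mod_cast hnat
    have hpow : (0:ℝ) < 2 ^ j := by positivity
    nlinarith
  · by_cases hM0 : M = 0
    · have hz : ∀ j ∈ (Finset.range (L + 1)).filter (fun (j : ℕ) => t < (j : ℤ)),
          ((D.filter (fun x => 2 ^ j / 2 < x ∧ x ≤ 2 ^ j)).sum : ℝ) = 0 := by
        intro j _
        have : D.filter (fun x => 2 ^ j / 2 < x ∧ x ≤ 2 ^ j) = 0 := by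
          rw [Multiset.filter_eq_nil]
          intro x hx hP
          have := hxM x hx
          omega
        simp [this]
      rw [Finset.sum_eq_zero hz, hM0]
      simp
    · have hM1 : 1 ≤ M := Nat.one_le_iff_ne_zero.mpr hM0
      set K := Nat.log 2 (2 * M) with hK
      have h2M : (1:ℕ) ≤ 2 * M := by omega
      have hKle : 2 ^ K ≤ 2 * M := Nat.pow_log_le_self 2 (by omega)
      -- each nonzero S_j has 2^j ≤ 2M
      have hvanish : ∀ j, ¬ (2 ^ j ≤ 2 * M) →
          D.filter (fun x => 2 ^ j / 2 < x ∧ x ≤ 2 ^ j) = 0 := by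
        intro j hjbig
        rw [Multiset.filter_eq_nil]
        intro x hx hP
        have h1 := hxM x hx
        obtain ⟨h2, _⟩ := hP
        -- 2^j/2 < x ≤ M; need contradiction with 2^j > 2M
        omega
      set T := (Finset.range (L + 1)).filter (fun (j : ℕ) => t < (j : ℤ)) with hT
      have step1 : (∑ j ∈ T, ((D.filter (fun x => 2 ^ j / 2 < x ∧ x ≤ 2 ^ j)).sum : ℝ)) ≤
          ∑ j ∈ T.filter (fun j => 2 ^ j ≤ 2 * M), (2 * c * 2 ^ j) := by
        rw [← Finset.sum_filter_add_sum_filter_not T (fun j => 2 ^ j ≤ 2 * M)]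
        have hz2 : (∑ j ∈ T.filter (fun j => ¬ 2 ^ j ≤ 2 * M),
            ((D.filter (fun x => 2 ^ j / 2 < x ∧ x ≤ 2 ^ j)).sum : ℝ)) = 0 := by
          apply Finset.sum_eq_zero
          intro j hj
          have := hvanish j (Finset.mem_filter.mp hj).2
          simp [this]
        rw [hz2, add_zero]
        apply Finset.sum_le_sum
        intro j hj
        obtain ⟨hjT, _⟩ := Finset.mem_filter.mp hj
        obtain ⟨hjr, hjt⟩ := Finset.mem_filter.mp hjT
        exact hSle j (Nat.lt_succ_iff.mp (Finset.mem_range.mp hjr)) hjt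
      have step2 : (∑ j ∈ T.filter (fun j => 2 ^ j ≤ 2 * M), (2 * c * 2 ^ j : ℝ)) ≤
          ∑ j ∈ Finset.range (K + 1), (2 * c * 2 ^ j : ℝ) := by
        apply Finset.sum_le_sum_of_subset_of_nonneg
        · intro j hj
          obtain ⟨_, hjle⟩ := Finset.mem_filter.mp hj
          rw [Finset.mem_range, Nat.lt_succ_iff, hK]
          exact Nat.le_log_of_pow_le (by norm_num) hjle
        · intro j _ _
          positivity
      have step3 : (∑ j ∈ Finset.range (K + 1), (2 * c * 2 ^ j : ℝ)) ≤ 8 * c * M := by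
        rw [← Finset.mul_sum]
        have hgeom : (∑ j ∈ Finset.range (K + 1), ((2:ℝ)) ^ j) = 2 ^ (K + 1) - 1 := by
          have := geom_sum_eq (x := (2:ℝ)) (by norm_num) (K + 1)
          rw [this]; ring
        rw [hgeom]
        have hKR : (2:ℝ) ^ K ≤ 2 * M := by exact_mod_cast hKle
        have : (2:ℝ) ^ (K + 1) - 1 ≤ 4 * M := by
          rw [pow_succ]
          nlinarith
        nlinarith
      calc (∑ j ∈ T, ((D.filter (fun x => 2 ^ j / 2 < x ∧ x ≤ 2 ^ j)).sum : ℝ))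
          ≤ _ := step1
        _ ≤ _ := step2
        _ ≤ 8 * c * M := step3
end

section
/- No-overshoot for threshold selection: with the setup of the previous lemma, if for every j the estimate satisfies |S̃_j − S_j| ≤ c·2^j, then the selected index t (the largest j with S̃_j > c·2^j) satisfies 2^t ≤ 2·Max(D); i.e., the chosen clipping threshold τ = 2^t never exceeds twice the true maximum of D. -/
lemma le_fold_max_of_mem {x : ℕ} {D : Multiset ℕ} (hx : x ∈ D) :
    x ≤ D.fold max 0 := by
  induction D using Multiset.induction with
  | empty => simp at hx
  | cons a s ih =>
    rw [Multiset.fold_cons_left]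
    rcases Multiset.mem_cons.mp hx with h | h
    · exact h ▸ le_max_left _ _
    · exact le_trans (ih h) (le_max_right _ _)

/-- No-overshoot for threshold selection. With `D` a nonempty finite
multiset of integers in `{0,...,2^L}`, dyadic sub-domain sums
`S j = Sum(D ∩ [2^(j-1)+1, 2^j])` (in ℕ the interval is `{x | 2^j / 2 < x ∧ x ≤ 2^j}`),
and estimates satisfying `|Sest j − S j| ≤ c·2^j` for all `j ≤ L`: if the selected index
`t ≤ L` satisfies the selection condition `Sest t > c·2^t`, then the chosen clipping
threshold `τ = 2^t` satisfies `2^t ≤ 2·Max(D)`. -/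
theorem no_overshoot (L : ℕ) (D : Multiset ℕ) (hne : D ≠ 0)
    (hD : ∀ x ∈ D, x ≤ 2 ^ L) (c : ℝ) (hc : 0 ≤ c)
    (Sest : ℕ → ℝ)
    (herr : ∀ j ≤ L,
      |Sest j - ((D.filter (fun x => 2 ^ j / 2 < x ∧ x ≤ 2 ^ j)).sum : ℝ)| ≤ c * 2 ^ j)
    (t : ℕ) (htL : t ≤ L) (hcond : c * 2 ^ t < Sest t) :
    2 ^ t ≤ 2 * D.fold max 0 := by
  have h := herr t htL
  set S : ℕ := (D.filter (fun x => 2 ^ t / 2 < x ∧ x ≤ 2 ^ t)).sum with hS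
  have hSpos : 0 < S := by
    by_contra hz
    push_neg at hz
    interval_cases S
    simp only [Nat.cast_zero, sub_zero] at h
    have := le_trans (le_abs_self _) h
    linarith
  -- there is an element x in the filter
  obtain ⟨x, hxmem⟩ : ∃ x, x ∈ D.filter (fun x => 2 ^ t / 2 < x ∧ x ≤ 2 ^ t) := by
    by_contra hno
    push_neg at hno
    have : D.filter (fun x => 2 ^ t / 2 < x ∧ x ≤ 2 ^ t) = 0 :=
      Multiset.eq_zero_of_forall_notMem hno
    rw [hS, this] at hSpos
    simp at hSpos
  rw [Multiset.mem_filter] at hxmem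
  obtain ⟨hxD, hlt, _⟩ := hxmem
  have hx2 : 2 ^ t < x * 2 := (Nat.div_lt_iff_lt_mul (by norm_num)).mp hlt
  have hxmax : x ≤ D.fold max 0 := le_fold_max_of_mem hxD
  omega
end

section
/- Combined error bound for the one-round clipping protocol: let D be a nonempty finite multiset of integers in {0,...,U}, let S_j = Sum(D ∩ [2^{j-1}+1,2^j]), and suppose estimates S̃_j satisfy |S̃_j − S_j| ≤ c·2^j for all j = 0,...,log₂ U. Let t be the largest j with S̃_j > c·2^j (τ = 2^t), and output S̃ = Σ_{j=0}^{t} S̃_j. Then |S̃ − Sum(D)| ≤ |Σ_{j=0}^{t}(S̃_j − S_j)| + Σ_{j>t} S_j ≤ 4c·Max(D) + 8c·Max(D) = 12c·Max(D). -/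
lemma pow_div_two (j : ℕ) (hj : 0 < j) : 2 ^ j / 2 = 2 ^ (j - 1) := by
  obtain ⟨k, rfl⟩ : ∃ k, j = k + 1 := ⟨j - 1, by omega⟩
  simp [pow_succ]

open Finset in
lemma dyadic_pointwise (L a : ℕ) (ha : a ≤ 2 ^ L) :
    ∑ j ∈ Finset.range (L + 1), (if 2 ^ j / 2 < a ∧ a ≤ 2 ^ j then a else 0) = a := by
  rcases Nat.eq_zero_or_pos a with rfl | hpos
  · simp
  · have h2 : (1 : ℕ) < 2 := one_lt_two
    set j₀ := Nat.clog 2 a with hj₀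
    have hmem : j₀ ∈ Finset.range (L + 1) := by
      rw [Finset.mem_range, Nat.lt_succ_iff, hj₀, Nat.clog_le_iff_le_pow h2]
      exact ha
    refine Finset.sum_eq_single_of_mem j₀ hmem ?_ |>.trans ?_
    · intro j hj hne
      rw [if_neg]
      rintro ⟨h1, h2'⟩
      apply hne
      have hle : j₀ ≤ j := (Nat.clog_le_iff_le_pow h2).mpr h2'
      rcases Nat.eq_zero_or_pos j with rfl | hjpos
      · omega
      · -- j ≥ 1 : 2^j/2 = 2^(j-1) < a so clog > j-1
        have : 2 ^ j / 2 = 2 ^ (j - 1) := pow_div_two j hjpos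
        rw [this] at h1
        have : ¬ a ≤ 2 ^ (j - 1) := by omega
        rw [← Nat.clog_le_iff_le_pow h2] at this
        omega
    · rw [if_pos]
      constructor
      · rcases Nat.eq_zero_or_pos j₀ with hz | hjpos
        · rw [hz]; simpa using hpos
        · have heq : 2 ^ j₀ / 2 = 2 ^ (j₀ - 1) := pow_div_two j₀ hjpos
          rw [heq]
          by_contra hcon
          push_neg at hcon
          rw [← Nat.clog_le_iff_le_pow h2] at hcon
          omega
      · exact Nat.le_pow_clog h2 a

lemma dyadic_partition (L : ℕ) (D : Multiset ℕ) (hD : ∀ x ∈ D, x ≤ 2 ^ L) :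
    ∑ j ∈ Finset.range (L + 1),
      (D.filter (fun x => 2 ^ j / 2 < x ∧ x ≤ 2 ^ j)).sum = D.sum := by
  induction D using Multiset.induction_on with
  | empty => simp
  | cons a s ih =>
    have ha : a ≤ 2 ^ L := hD a (Multiset.mem_cons_self a s)
    have hs : ∀ x ∈ s, x ≤ 2 ^ L := fun x hx => hD x (Multiset.mem_cons_of_mem hx)
    have : ∀ j, (Multiset.filter (fun x => 2 ^ j / 2 < x ∧ x ≤ 2 ^ j) (a ::ₘ s)).sum
        = (if 2 ^ j / 2 < a ∧ a ≤ 2 ^ j then a else 0)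
          + (Multiset.filter (fun x => 2 ^ j / 2 < x ∧ x ≤ 2 ^ j) s).sum := by
      intro j
      rw [Multiset.filter_cons, Multiset.sum_add]
      congr 1
      split <;> simp
    simp only [this, Finset.sum_add_distrib, ih hs, dyadic_pointwise L a ha,
      Multiset.sum_cons]

lemma le_fold_max_nat (s : Multiset ℕ) : ∀ x ∈ s, x ≤ s.fold max 0 := by
  induction s using Multiset.induction_on with
  | empty => simp
  | cons a s ih =>
    intro x hx
    rw [Multiset.fold_cons_left]
    rcases Multiset.mem_cons.mp hx with rfl | h
    · exact le_max_left _ _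
    · exact le_trans (ih x h) (le_max_right _ _)

lemma sum_range_two_pow (m : ℕ) : ∑ j ∈ Finset.range m, 2 ^ j = 2 ^ m - 1 := by
  induction m with
  | zero => simp
  | succ m ih =>
    rw [Finset.sum_range_succ, ih]
    have h1 : 1 ≤ 2 ^ m := Nat.one_le_two_pow
    have h2 : 2 ^ (m + 1) = 2 * 2 ^ m := by rw [pow_succ]; ring
    omega

lemma sum_if_pow_le (n B : ℕ) (hB : 0 < B) :
    ∑ j ∈ Finset.range n, (if 2 ^ j < B then 2 ^ j else 0) ≤ 2 * B := by
  have step : ∑ j ∈ Finset.range n, (if 2 ^ j < B then 2 ^ j else 0)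
      ≤ ∑ j ∈ Finset.range (Nat.log 2 B + 1), 2 ^ j := by
    rw [← Finset.sum_filter]
    apply Finset.sum_le_sum_of_subset
    intro j hj
    simp only [Finset.mem_filter, Finset.mem_range] at *
    have : 2 ^ j ≤ B := le_of_lt hj.2
    have := (Nat.le_log_iff_pow_le one_lt_two hB.ne').mpr this
    omega
  refine step.trans ?_
  rw [sum_range_two_pow]
  have h1 : 2 ^ Nat.log 2 B ≤ B := Nat.pow_log_le_self 2 hB.ne'
  have h2 : 2 ^ (Nat.log 2 B + 1) = 2 * 2 ^ Nat.log 2 B := by rw [pow_succ]; ring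
  omega

lemma fold_max_map_cast (s : Multiset ℕ) :
    Multiset.fold max 0 (Multiset.map (fun x : ℕ => (x:ℝ)) s) = ((s.fold max 0 : ℕ) : ℝ) := by
  induction s using Multiset.induction_on with
  | empty => simp
  | cons a s ih => simp [Multiset.fold_cons_left, ih, Nat.cast_max]

lemma fold_max_coe (D : Multiset ℕ) : (D.fold max 0 : ℝ) = ((D.fold max 0 : ℕ) : ℝ) := by
  have h1 : (D.fold max 0 : ℝ) = Multiset.fold max 0 (Multiset.map (fun x : ℕ => (x:ℝ)) D) := by
    congr 1
    induction D using Multiset.induction_on with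
    | empty => simp
    | cons a s ih => simp [Bind.bind, Multiset.bind, Multiset.join, Multiset.map_map] at ih ⊢; simp [ih]
  rw [h1, fold_max_map_cast]

/-- Combined error bound for the one-round clipping protocol. Let `D` be a
nonempty finite multiset of integers in `{0,...,2^L}`, with dyadic sub-domain sums
`S j = Sum(D ∩ [2^(j-1)+1, 2^j])` (in ℕ the interval is `{x | 2^j / 2 < x ∧ x ≤ 2^j}`),
and estimates `Sest j` satisfying `|Sest j − S j| ≤ c·2^j` for all `j ≤ L`. Let `t ≤ L`
be the largest index with `Sest t > c·2^t`, and output `Σ_{j=0}^{t} Sest j`. Then the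
output differs from `Sum(D)` by at most `12·c·Max(D)`. -/
theorem one_round_clipping_error (L : ℕ) (D : Multiset ℕ) (hne : D ≠ 0)
    (hD : ∀ x ∈ D, x ≤ 2 ^ L) (c : ℝ) (hc : 0 ≤ c)
    (Sest : ℕ → ℝ)
    (herr : ∀ j ≤ L,
      |Sest j - ((D.filter (fun x => 2 ^ j / 2 < x ∧ x ≤ 2 ^ j)).sum : ℝ)| ≤ c * 2 ^ j)
    (t : ℕ) (htL : t ≤ L) (hcond : c * 2 ^ t < Sest t)
    (hlast : ∀ j ≤ L, t < j → ¬ (c * 2 ^ j < Sest j)) :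
    |(∑ j ∈ Finset.range (t + 1), Sest j) - (D.sum : ℝ)| ≤
      12 * c * (D.fold max 0 : ℝ) := by
  rw [fold_max_coe]
  set S : ℕ → ℕ := fun j => (D.filter (fun x => 2 ^ j / 2 < x ∧ x ≤ 2 ^ j)).sum with hS
  set M : ℕ := D.fold max 0 with hMdef
  have hM : ∀ x ∈ D, x ≤ M := le_fold_max_nat D
  -- S t > 0, hence there is an element in the t-th band
  have hSt : 0 < S t := by
    by_contra h
    push_neg at h
    have hSt0 : ((D.filter (fun x => 2 ^ t / 2 < x ∧ x ≤ 2 ^ t)).sum : ℝ) = 0 := by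
      have h0 : S t = 0 := by omega
      exact_mod_cast h0
    have hh := herr t htL
    rw [hSt0, sub_zero] at hh
    exact absurd (le_of_abs_le hh) (not_le.mpr hcond)
  have hband : ∃ x ∈ D, 2 ^ t / 2 < x ∧ x ≤ 2 ^ t := by
    have hfil : D.filter (fun x => 2 ^ t / 2 < x ∧ x ≤ 2 ^ t) ≠ 0 := by
      intro h
      have : S t = 0 := by
        show (D.filter (fun x => 2 ^ t / 2 < x ∧ x ≤ 2 ^ t)).sum = 0
        rw [h]; rfl
      omega
    obtain ⟨x, hx⟩ := Multiset.exists_mem_of_ne_zero hfil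
    exact ⟨x, (Multiset.mem_filter.mp hx).1, (Multiset.mem_filter.mp hx).2⟩
  obtain ⟨x₀, hx₀D, hx₀1, hx₀2⟩ := hband
  have hM1 : 1 ≤ M := le_trans (by omega) (hM x₀ hx₀D)
  have h2t : 2 ^ t ≤ 2 * M := by
    have := (Nat.div_lt_iff_lt_mul (by norm_num)).mp hx₀1
    have := hM x₀ hx₀D
    omega
  -- partition of the sum
  have hpart : ∑ j ∈ Finset.range (L + 1), S j = D.sum := dyadic_partition L D hD
  -- split the range
  have hsplit : ∑ j ∈ Finset.range (L + 1), (S j : ℝ)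
      = ∑ j ∈ Finset.range (t + 1), (S j : ℝ)
        + ∑ j ∈ Finset.Ico (t + 1) (L + 1), (S j : ℝ) := by
    simp only [Finset.range_eq_Ico]
    exact (Finset.sum_Ico_consecutive _ (Nat.zero_le _) (by omega)).symm
  have hDsum : (D.sum : ℝ) = ∑ j ∈ Finset.range (L + 1), (S j : ℝ) := by
    rw [← hpart]; push_cast; ring
  -- first term bound
  have hfirst : |∑ j ∈ Finset.range (t + 1), (Sest j - (S j : ℝ))|
      ≤ 4 * c * (M : ℝ) := by
    calc |∑ j ∈ Finset.range (t + 1), (Sest j - (S j : ℝ))|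
        ≤ ∑ j ∈ Finset.range (t + 1), |Sest j - (S j : ℝ)| :=
          Finset.abs_sum_le_sum_abs _ _
      _ ≤ ∑ j ∈ Finset.range (t + 1), c * 2 ^ j := by
          apply Finset.sum_le_sum
          intro j hj
          exact herr j (by simp at hj; omega)
      _ = c * ∑ j ∈ Finset.range (t + 1), (2 : ℝ) ^ j := by
          rw [Finset.mul_sum]
      _ ≤ c * 2 ^ (t + 1) := by
          apply mul_le_mul_of_nonneg_left _ hc
          have hg := geom_sum_eq (by norm_num : (2 : ℝ) ≠ 1) (t + 1)
          norm_num at hg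
          rw [hg]; linarith
      _ ≤ 4 * c * (M : ℝ) := by
          have h2t' : (2 : ℝ) ^ t ≤ 2 * (M : ℝ) := by
            calc (2 : ℝ) ^ t = ((2 ^ t : ℕ) : ℝ) := by push_cast; ring
              _ ≤ ((2 * M : ℕ) : ℝ) := by exact_mod_cast h2t
              _ = 2 * (M : ℝ) := by push_cast; ring
          have he : (2 : ℝ) ^ (t + 1) = 2 * 2 ^ t := by ring
          rw [he]
          nlinarith
  -- second term bound
  have hsecond : ∑ j ∈ Finset.Ico (t + 1) (L + 1), (S j : ℝ) ≤ 8 * c * (M : ℝ) := by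
    have hterm : ∀ j ∈ Finset.Ico (t + 1) (L + 1),
        (S j : ℝ) ≤ 2 * c * ((if 2 ^ j < 2 * M then 2 ^ j else 0 : ℕ) : ℝ) := by
      intro j hj
      simp only [Finset.mem_Ico] at hj
      have hjL : j ≤ L := by omega
      have htj : t < j := by omega
      by_cases hcase : 2 ^ j < 2 * M
      · rw [if_pos hcase]
        have h1 := herr j hjL
        have h2 : Sest j ≤ c * 2 ^ j := not_lt.mp (hlast j hjL htj)
        have h3 := abs_le.mp h1
        have hcc : ((2 ^ j : ℕ) : ℝ) = (2 : ℝ) ^ j := by push_cast; ring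
        rw [hcc]
        have hSj : ((D.filter (fun x => 2 ^ j / 2 < x ∧ x ≤ 2 ^ j)).sum : ℝ) = (S j : ℝ) := rfl
        rw [hSj] at h3
        linarith [h3.1]
      · rw [if_neg hcase]
        have hzero : S j = 0 := by
          show (D.filter (fun x => 2 ^ j / 2 < x ∧ x ≤ 2 ^ j)).sum = 0
          have hfe : D.filter (fun x => 2 ^ j / 2 < x ∧ x ≤ 2 ^ j) = 0 := by
            rw [Multiset.filter_eq_nil]
            intro a ha
            have haM := hM a ha
            have hle : M ≤ 2 ^ j / 2 := Nat.le_div_iff_mul_le (by norm_num) |>.mpr (by omega)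
            push_neg
            intro hlt
            omega
          rw [hfe]; rfl
        simp [hzero]
    calc ∑ j ∈ Finset.Ico (t + 1) (L + 1), (S j : ℝ)
        ≤ ∑ j ∈ Finset.Ico (t + 1) (L + 1),
            2 * c * ((if 2 ^ j < 2 * M then 2 ^ j else 0 : ℕ) : ℝ) :=
          Finset.sum_le_sum hterm
      _ = 2 * c * ((∑ j ∈ Finset.Ico (t + 1) (L + 1),
            (if 2 ^ j < 2 * M then 2 ^ j else 0 : ℕ) : ℕ) : ℝ) := by
          rw [← Finset.mul_sum]; push_cast; ring
      _ ≤ 2 * c * ((∑ j ∈ Finset.range (L + 1),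
            (if 2 ^ j < 2 * M then 2 ^ j else 0 : ℕ) : ℕ) : ℝ) := by
          apply mul_le_mul_of_nonneg_left _ (by linarith)
          have hsub : Finset.Ico (t + 1) (L + 1) ⊆ Finset.range (L + 1) := by
            intro j hj
            simp only [Finset.mem_Ico] at hj
            simp only [Finset.mem_range]
            omega
          exact_mod_cast Finset.sum_le_sum_of_subset hsub
      _ ≤ 2 * c * ((2 * (2 * M) : ℕ) : ℝ) := by
          apply mul_le_mul_of_nonneg_left _ (by linarith)
          exact_mod_cast sum_if_pow_le (L + 1) (2 * M) (by omega)
      _ = 8 * c * (M : ℝ) := by push_cast; ring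
  -- combine
  have hSnn : 0 ≤ ∑ j ∈ Finset.Ico (t + 1) (L + 1), (S j : ℝ) :=
    Finset.sum_nonneg fun j _ => Nat.cast_nonneg _
  have key : (∑ j ∈ Finset.range (t + 1), Sest j) - (D.sum : ℝ)
      = (∑ j ∈ Finset.range (t + 1), (Sest j - (S j : ℝ)))
        - ∑ j ∈ Finset.Ico (t + 1) (L + 1), (S j : ℝ) := by
    rw [hDsum, hsplit, Finset.sum_sub_distrib]
    ring
  rw [key]
  calc |(∑ j ∈ Finset.range (t + 1), (Sest j - (S j : ℝ)))
        - ∑ j ∈ Finset.Ico (t + 1) (L + 1), (S j : ℝ)|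
      ≤ |∑ j ∈ Finset.range (t + 1), (Sest j - (S j : ℝ))|
        + |∑ j ∈ Finset.Ico (t + 1) (L + 1), (S j : ℝ)| := abs_sub _ _
    _ ≤ 4 * c * (M : ℝ) + 8 * c * (M : ℝ) := by
        rw [abs_of_nonneg hSnn]
        exact add_le_add hfirst hsecond
    _ = 12 * c * (M : ℝ) := by ring
end
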